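/- arXiv:1409.8044 — 3 statements merged into one kernel-verified Lean document; each statement's English description precedes it below -/
import Mathlib

section
/- Let M be an r × r real matrix all of whose entries are ≥ 1, and let λ(M) denote its spectral radius. Then λ(M) ≤ ‖M‖ ≤ r·λ(M)², where ‖M‖ denotes the operator norm. -/
open Matrix Filter
open scoped ENNReal NNReal Topology

set_option maxHeartbeats 1000000

/-- The operator norm of an r × r real matrix acting on Euclidean space ℝ^r. -/
noncomputable def opNorm {r : ℕ} (M : Matrix (Fin r) (Fin r) ℝ) : ℝ :=
  ‖(Matrix.toEuclideanCLM (𝕜 := ℝ) M : EuclideanSpace ℝ (Fin r) →L[ℝ] EuclideanSpace ℝ (Fin r))‖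

/-- The Euclidean norm of a vector in ℝ^r. -/
noncomputable def vNorm {r : ℕ} (v : Fin r → ℝ) : ℝ :=
  ‖(WithLp.equiv 2 (Fin r → ℝ)).symm v‖

lemma entry_le_opNorm (r : ℕ) (N : Matrix (Fin r) (Fin r) ℂ) (i j : Fin r) :
    ‖N i j‖ ≤ ‖(Matrix.toEuclideanCLM (𝕜 := ℂ) N :
      EuclideanSpace ℂ (Fin r) →L[ℂ] EuclideanSpace ℂ (Fin r))‖ := by
  have h1 : ‖toEuclideanCLM (𝕜 := ℂ) N ((WithLp.equiv 2 _).symm (Pi.single j 1))‖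
      ≤ ‖toEuclideanCLM (𝕜 := ℂ) N‖ * ‖(WithLp.equiv 2 (Fin r → ℂ)).symm (Pi.single j 1)‖ :=
    ContinuousLinearMap.le_opNorm _ _
  change ‖(WithLp.equiv 2 (Fin r → ℂ)).symm (Matrix.toLin' N (Pi.single j 1))‖ ≤ _ at h1
  have h2 : ‖(WithLp.equiv 2 (Fin r → ℂ)).symm (Pi.single j (1:ℂ))‖ = 1 := by
    simpa using EuclideanSpace.norm_single (𝕜 := ℂ) j 1
  rw [h2, mul_one] at h1
  refine le_trans ?_ h1
  have h3 : Matrix.toLin' N (Pi.single j 1) = fun i => N i j := by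
    simp [Matrix.toLin'_apply, Matrix.mulVec_single, Matrix.col]; rfl
  rw [h3, EuclideanSpace.norm_eq,
    show ‖N i j‖ = ‖N i j‖ from rfl]
  rw [Real.le_sqrt (norm_nonneg _)]
  · exact Finset.single_le_sum (f := fun k => ‖N k j‖^2) (fun k _ => sq_nonneg _) (Finset.mem_univ i)
  · positivity

lemma one_le_pow_entry {r : ℕ} {M : Matrix (Fin r) (Fin r) ℝ} (hM : ∀ i j, 1 ≤ M i j) :
    ∀ n i j, 1 ≤ (M ^ (n + 1)) i j := by
  intro n
  induction n with
  | zero => simpa using hM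
  | succ n ih =>
    intro i j
    have : M ^ (n + 2) = M ^ (n + 1) * M := pow_succ M (n+1)
    rw [this, Matrix.mul_apply]
    calc (1:ℝ) = 1 * 1 := (one_mul 1).symm
    _ ≤ (M ^ (n+1)) i j * M j j := by
        exact mul_le_mul (ih i j) (hM j j) zero_le_one (le_trans zero_le_one (ih i j))
    _ ≤ ∑ l, (M ^ (n+1)) i l * M l j :=
        Finset.single_le_sum (f := fun l => (M ^ (n+1)) i l * M l j)
          (fun l _ => mul_nonneg (le_trans zero_le_one (ih i l)) (le_trans zero_le_one (hM l j)))
          (Finset.mem_univ j)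

lemma entry_pow_le_pow_entry {r : ℕ} {M : Matrix (Fin r) (Fin r) ℝ} (hM : ∀ i j, 1 ≤ M i j) :
    ∀ n i j, M i j ^ (n + 1) ≤ (M ^ (2 * (n + 1))) i j := by
  have h0 : ∀ n i j, (0:ℝ) ≤ (M ^ (n+1)) i j :=
    fun n i j => le_trans zero_le_one (one_le_pow_entry hM n i j)
  intro n
  induction n with
  | zero =>
    intro i j
    rw [show (0:ℕ) + 1 = 1 from rfl, pow_one]
    rw [show (2 * 1 : ℕ) = 2 by norm_num, pow_two, Matrix.mul_apply]
    calc M i j = M i j * 1 := (mul_one _).symm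
    _ ≤ M i j * M j j := by
        exact mul_le_mul_of_nonneg_left (hM j j) (le_trans zero_le_one (hM i j))
    _ ≤ ∑ l, M i l * M l j :=
        Finset.single_le_sum (f := fun l => M i l * M l j)
          (fun l _ => mul_nonneg (le_trans zero_le_one (hM i l)) (le_trans zero_le_one (hM l j)))
          (Finset.mem_univ j)
  | succ n ih =>
    intro i j
    have hcur : M ^ (2 * (n + 2)) = M ^ (2 * (n + 1)) * M ^ 2 := by
      rw [show 2 * (n + 2) = 2 * (n + 1) + 2 by ring, pow_add]
    rw [hcur, Matrix.mul_apply]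
    have h2jj : M i j ≤ (M ^ 2) j j := by
      rw [pow_two, Matrix.mul_apply]
      calc M i j = 1 * M i j := (one_mul _).symm
      _ ≤ M j i * M i j := mul_le_mul_of_nonneg_right (hM j i) (le_trans zero_le_one (hM i j))
      _ ≤ ∑ l, M j l * M l j :=
        Finset.single_le_sum (f := fun l => M j l * M l j)
          (fun l _ => mul_nonneg (le_trans zero_le_one (hM j l)) (le_trans zero_le_one (hM l j)))
          (Finset.mem_univ i)
    calc M i j ^ (n + 2) = M i j ^ (n + 1) * M i j := by ring
    _ ≤ (M ^ (2 * (n + 1))) i j * (M ^ 2) j j := by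
        refine mul_le_mul (ih i j) h2jj (le_trans zero_le_one (hM i j)) ?_
        have := h0 (2 * n + 1) i j; rwa [show 2 * n + 1 + 1 = 2 * (n + 1) by ring] at this
    _ ≤ ∑ l, (M ^ (2 * (n + 1))) i l * (M ^ 2) l j := by
        refine Finset.single_le_sum (f := fun l => (M ^ (2 * (n+1))) i l * (M ^ 2) l j)
          (fun l _ => mul_nonneg ?_ ?_) (Finset.mem_univ j)
        · have := h0 (2 * n + 1) i l; rwa [show 2 * n + 1 + 1 = 2 * (n + 1) by ring] at this
        · exact h0 1 l j

lemma euclid_apply {r : ℕ} (N : Matrix (Fin r) (Fin r) ℂ) (w : EuclideanSpace ℂ (Fin r)) (i : Fin r) :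
    (toEuclideanCLM (𝕜 := ℂ) N w) i = ∑ j, N i j * w j := rfl

lemma euclid_apply_r {r : ℕ} (N : Matrix (Fin r) (Fin r) ℝ) (w : EuclideanSpace ℝ (Fin r)) (i : Fin r) :
    (toEuclideanCLM (𝕜 := ℝ) N w) i = ∑ j, N i j * w j := rfl

lemma complexification_norm_le {r : ℕ} (M : Matrix (Fin r) (Fin r) ℝ) :
    ‖(toEuclideanCLM (𝕜 := ℂ) (M.map Complex.ofReal) :
        EuclideanSpace ℂ (Fin r) →L[ℂ] EuclideanSpace ℂ (Fin r))‖ ≤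
      ‖(toEuclideanCLM (𝕜 := ℝ) M : EuclideanSpace ℝ (Fin r) →L[ℝ] EuclideanSpace ℝ (Fin r))‖ := by
  set B := (toEuclideanCLM (𝕜 := ℝ) M : EuclideanSpace ℝ (Fin r) →L[ℝ] EuclideanSpace ℝ (Fin r))
  refine ContinuousLinearMap.opNorm_le_bound _ (norm_nonneg B) (fun w => ?_)
  set a : EuclideanSpace ℝ (Fin r) := (WithLp.equiv 2 (Fin r → ℝ)).symm (fun j => (w j).re)
  set b : EuclideanSpace ℝ (Fin r) := (WithLp.equiv 2 (Fin r → ℝ)).symm (fun j => (w j).im)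
  have ha : ∀ j, a j = (w j).re := fun j => rfl
  have hb : ∀ j, b j = (w j).im := fun j => rfl
  have hre : ∀ i, ((toEuclideanCLM (𝕜 := ℂ) (M.map Complex.ofReal) w) i).re = (B a) i := by
    intro i
    rw [euclid_apply, euclid_apply_r, Complex.re_sum]
    exact Finset.sum_congr rfl fun j _ => by simp [Matrix.map_apply, ha]
  have him : ∀ i, ((toEuclideanCLM (𝕜 := ℂ) (M.map Complex.ofReal) w) i).im = (B b) i := by
    intro i
    rw [euclid_apply, euclid_apply_r, Complex.im_sum]
    exact Finset.sum_congr rfl fun j _ => by simp [Matrix.map_apply, hb]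
  have hw : ‖w‖ ^ 2 = ‖a‖ ^ 2 + ‖b‖ ^ 2 := by
    rw [PiLp.norm_sq_eq_of_L2, PiLp.norm_sq_eq_of_L2, PiLp.norm_sq_eq_of_L2, ← Finset.sum_add_distrib]
    refine Finset.sum_congr rfl fun j _ => ?_
    rw [ha, hb]
    simp only [Real.norm_eq_abs, sq_abs]
    rw [Complex.sq_norm, Complex.normSq_apply]
    ring
  have hAw : ‖toEuclideanCLM (𝕜 := ℂ) (M.map Complex.ofReal) w‖ ^ 2 = ‖B a‖ ^ 2 + ‖B b‖ ^ 2 := by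
    rw [PiLp.norm_sq_eq_of_L2, PiLp.norm_sq_eq_of_L2, PiLp.norm_sq_eq_of_L2, ← Finset.sum_add_distrib]
    refine Finset.sum_congr rfl fun i _ => ?_
    rw [← hre, ← him]
    simp only [Real.norm_eq_abs, sq_abs]
    rw [Complex.sq_norm, Complex.normSq_apply]; ring
  have hfin : ‖toEuclideanCLM (𝕜 := ℂ) (M.map Complex.ofReal) w‖ ^ 2 ≤ (‖B‖ * ‖w‖) ^ 2 := by
    rw [hAw]
    have h1 : ‖B a‖ ^ 2 ≤ ‖B‖ ^ 2 * ‖a‖ ^ 2 := by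
      rw [← mul_pow]; exact pow_le_pow_left₀ (norm_nonneg _) (B.le_opNorm a) 2
    have h2 : ‖B b‖ ^ 2 ≤ ‖B‖ ^ 2 * ‖b‖ ^ 2 := by
      rw [← mul_pow]; exact pow_le_pow_left₀ (norm_nonneg _) (B.le_opNorm b) 2
    calc ‖B a‖ ^ 2 + ‖B b‖ ^ 2 ≤ ‖B‖ ^ 2 * ‖a‖ ^ 2 + ‖B‖ ^ 2 * ‖b‖ ^ 2 := add_le_add h1 h2
    _ = (‖B‖ * ‖w‖) ^ 2 := by rw [mul_pow, hw]; ring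
  calc ‖toEuclideanCLM (𝕜 := ℂ) (M.map Complex.ofReal) w‖
      = Real.sqrt (‖toEuclideanCLM (𝕜 := ℂ) (M.map Complex.ofReal) w‖ ^ 2) :=
        (Real.sqrt_sq (norm_nonneg _)).symm
  _ ≤ Real.sqrt ((‖B‖ * ‖w‖) ^ 2) := Real.sqrt_le_sqrt hfin
  _ = ‖B‖ * ‖w‖ := Real.sqrt_sq (mul_nonneg (norm_nonneg _) (norm_nonneg _))

lemma opNorm_le_of_entries_le (r : ℕ) (M : Matrix (Fin r) (Fin r) ℝ)
    (hM : ∀ i j, 0 ≤ M i j) (C : ℝ) (hC0 : 0 ≤ C) (hC : ∀ i j, M i j ≤ C) :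
    ‖(Matrix.toEuclideanCLM (𝕜 := ℝ) M : EuclideanSpace ℝ (Fin r) →L[ℝ] EuclideanSpace ℝ (Fin r))‖
      ≤ r * C := by
  set B := (toEuclideanCLM (𝕜 := ℝ) M : EuclideanSpace ℝ (Fin r) →L[ℝ] EuclideanSpace ℝ (Fin r))
  refine ContinuousLinearMap.opNorm_le_bound _ (by positivity) (fun v => ?_)
  have happly : ∀ i, (B v) i = ∑ j, M i j * v j := fun i => rfl
  have hterm : ∀ i, ‖(B v) i‖ ≤ C * ∑ j, ‖v j‖ := by
    intro i
    rw [happly]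
    calc ‖∑ j, M i j * v j‖ ≤ ∑ j, ‖M i j * v j‖ := norm_sum_le _ _
    _ = ∑ j, M i j * ‖v j‖ := by
        refine Finset.sum_congr rfl fun j _ => ?_
        rw [norm_mul, Real.norm_of_nonneg (hM i j)]
    _ ≤ ∑ j, C * ‖v j‖ := by
        refine Finset.sum_le_sum fun j _ => mul_le_mul_of_nonneg_right (hC i j) (norm_nonneg _)
    _ = C * ∑ j, ‖v j‖ := by rw [Finset.mul_sum]
  have hsum : (∑ j, ‖v j‖) ^ 2 ≤ r * ∑ j, ‖v j‖ ^ 2 := by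
    have := sq_sum_le_card_mul_sum_sq (s := (Finset.univ : Finset (Fin r))) (f := fun j => ‖v j‖)
    simpa using this
  have hsq : ‖B v‖ ^ 2 ≤ (r * C * ‖v‖) ^ 2 := by
    rw [PiLp.norm_sq_eq_of_L2]
    calc ∑ i, ‖(B v) i‖ ^ 2 ≤ ∑ _i : Fin r, (C * ∑ j, ‖v j‖) ^ 2 := by
          refine Finset.sum_le_sum fun i _ => pow_le_pow_left₀ (norm_nonneg _) (hterm i) 2
    _ = r * (C ^ 2 * (∑ j, ‖v j‖) ^ 2) := by
        rw [Finset.sum_const, Finset.card_univ, Fintype.card_fin, nsmul_eq_mul, mul_pow]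
    _ ≤ r * (C ^ 2 * (r * ∑ j, ‖v j‖ ^ 2)) := by
        refine mul_le_mul_of_nonneg_left (mul_le_mul_of_nonneg_left hsum (by positivity)) (by positivity)
    _ = (r * C * ‖v‖) ^ 2 := by rw [mul_pow, mul_pow, PiLp.norm_sq_eq_of_L2]; ring
  calc ‖B v‖ = Real.sqrt (‖B v‖ ^ 2) := (Real.sqrt_sq (norm_nonneg _)).symm
  _ ≤ Real.sqrt ((r * C * ‖v‖) ^ 2) := Real.sqrt_le_sqrt hsq
  _ = r * C * ‖v‖ := Real.sqrt_sq (by positivity)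

lemma entries_le_sq_spectral {r : ℕ} (hr : 0 < r) (M : Matrix (Fin r) (Fin r) ℝ)
    (hM : ∀ i j, 1 ≤ M i j) (lam : ℝ)
    (hlam : IsGreatest {x : ℝ | ∃ μ ∈ spectrum ℂ (M.map Complex.ofReal), ‖μ‖ = x} lam) :
    ∀ i j, M i j ≤ lam ^ 2 := by
  haveI : Nonempty (Fin r) := Fin.pos_iff_nonempty.mp hr
  set A := (toEuclideanCLM (𝕜 := ℂ) (M.map Complex.ofReal) :
      EuclideanSpace ℂ (Fin r) →L[ℂ] EuclideanSpace ℂ (Fin r)) with hA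
  have hspec : spectrum ℂ A = spectrum ℂ (M.map Complex.ofReal) :=
    AlgEquiv.spectrum_eq (Matrix.toEuclideanCLM (𝕜 := ℂ) (n := Fin r)) (M.map Complex.ofReal)
  obtain ⟨μ0, hμ0, habs0⟩ := hlam.1
  have hlam0 : 0 ≤ lam := habs0 ▸ (norm_nonneg μ0)
  have hrad : spectralRadius ℂ A = ENNReal.ofReal lam := by
    apply le_antisymm
    · refine iSup₂_le fun μ hμ => ?_
      have h1 : ‖μ‖ ≤ lam := hlam.2 ⟨μ, hspec ▸ hμ, rfl⟩
      calc (‖μ‖₊ : ℝ≥0∞) = ENNReal.ofReal ‖μ‖ := (ENNReal.ofReal_coe_nnreal).symm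
      _ ≤ ENNReal.ofReal lam := ENNReal.ofReal_le_ofReal h1
    · have h2 : ENNReal.ofReal lam = (‖μ0‖₊ : ℝ≥0∞) := by
        rw [← habs0, ← coe_nnnorm, ENNReal.ofReal_coe_nnreal]
      rw [h2]
      exact le_iSup₂ (f := fun k (_ : k ∈ spectrum ℂ A) => (‖k‖₊ : ℝ≥0∞)) μ0 (hspec ▸ hμ0)
  have hG := spectrum.pow_nnnorm_pow_one_div_tendsto_nhds_spectralRadius A
  rw [hrad] at hG
  have hφ : StrictMono (fun n : ℕ => 2 * (n + 1)) := fun a b h => by simp only; omega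
  have hG2 : Tendsto (fun n : ℕ => (‖A ^ (2 * (n + 1))‖₊ : ℝ≥0∞) ^ (1 / (2 * (n + 1) : ℕ) : ℝ))
      atTop (𝓝 (ENNReal.ofReal lam)) := hG.comp hφ.tendsto_atTop
  intro i j
  have hmap : ∀ k : ℕ, (M.map Complex.ofReal) ^ k = (M ^ k).map Complex.ofReal := by
    intro k
    have := map_pow (Complex.ofRealHom.mapMatrix (m := Fin r)) M k
    exact this.symm
  have key : ∀ n : ℕ, (ENNReal.ofReal (M i j)) ^ ((1:ℝ)/2)
      ≤ (‖A ^ (2 * (n + 1))‖₊ : ℝ≥0∞) ^ (1 / (2 * (n + 1) : ℕ) : ℝ) := by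
    intro n
    have hentry : M i j ^ (n + 1) ≤ (M ^ (2 * (n + 1))) i j :=
      entry_pow_le_pow_entry hM n i j
    have hAp : A ^ (2 * (n + 1)) = toEuclideanCLM (𝕜 := ℂ) ((M.map Complex.ofReal) ^ (2 * (n + 1))) := by
      rw [hA, ← map_pow]
    have hnorm : (M ^ (2 * (n + 1))) i j ≤ ‖A ^ (2 * (n + 1))‖ := by
      have h3 := entry_le_opNorm r ((M.map Complex.ofReal) ^ (2 * (n + 1))) i j
      rw [hmap, Matrix.map_apply, Complex.norm_real, Real.norm_eq_abs] at h3
      rw [hAp, hmap]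
      exact le_trans (le_abs_self _) h3
    have h4 : (0:ℝ) ≤ M i j := le_trans zero_le_one (hM i j)
    have h5 : ENNReal.ofReal (M i j) ^ (n + 1 : ℕ) ≤ (‖A ^ (2 * (n + 1))‖₊ : ℝ≥0∞) := by
      calc ENNReal.ofReal (M i j) ^ (n + 1 : ℕ) = ENNReal.ofReal (M i j ^ (n + 1)) :=
            (ENNReal.ofReal_pow h4 _).symm
      _ ≤ ENNReal.ofReal ‖A ^ (2 * (n + 1))‖ := ENNReal.ofReal_le_ofReal (le_trans hentry hnorm)
      _ = (‖A ^ (2 * (n + 1))‖₊ : ℝ≥0∞) := by rw [← coe_nnnorm, ENNReal.ofReal_coe_nnreal]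
    have h6 := ENNReal.rpow_le_rpow (z := (1 / (2 * (n + 1) : ℕ) : ℝ)) h5 (by positivity)
    refine le_trans (le_of_eq ?_) h6
    rw [← ENNReal.rpow_natCast (ENNReal.ofReal (M i j)) (n+1), ← ENNReal.rpow_mul]
    congr 1
    push_cast
    field_simp
  have hle : (ENNReal.ofReal (M i j)) ^ ((1:ℝ)/2) ≤ ENNReal.ofReal lam :=
    ge_of_tendsto hG2 (Eventually.of_forall key)
  have h7 : ENNReal.ofReal (M i j) ≤ ENNReal.ofReal (lam ^ 2) := by
    have := ENNReal.rpow_le_rpow (z := (2:ℝ)) hle (by norm_num)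
    rw [← ENNReal.rpow_mul] at this
    norm_num at this
    rwa [← ENNReal.ofReal_pow hlam0] at this
  exact (ENNReal.ofReal_le_ofReal_iff (by positivity)).mp h7

/-- If all entries of an r × r real matrix M are ≥ 1, and lam is its spectral radius
(the maximum modulus of its complex eigenvalues), then lam ≤ ‖M‖ ≤ r·lam². -/
theorem stmt3 (r : ℕ) (hr : 0 < r) (M : Matrix (Fin r) (Fin r) ℝ)
    (hM : ∀ i j, 1 ≤ M i j) (lam : ℝ)
    (hlam : IsGreatest {x : ℝ | ∃ μ ∈ spectrum ℂ (M.map Complex.ofReal), ‖μ‖ = x} lam) :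
    lam ≤ opNorm M ∧ opNorm M ≤ r * lam ^ 2 := by
  haveI : Nonempty (Fin r) := Fin.pos_iff_nonempty.mp hr
  haveI : Nontrivial (EuclideanSpace ℂ (Fin r)) := by
    refine ⟨0, (WithLp.equiv 2 (Fin r → ℂ)).symm (Pi.single ⟨0, hr⟩ 1), fun h => ?_⟩
    have := congrFun (congrArg (WithLp.equiv 2 (Fin r → ℂ)) h) ⟨0, hr⟩
    simpa using this
  have hspec : spectrum ℂ (toEuclideanCLM (𝕜 := ℂ) (M.map Complex.ofReal) :
      EuclideanSpace ℂ (Fin r) →L[ℂ] EuclideanSpace ℂ (Fin r)) = spectrum ℂ (M.map Complex.ofReal) :=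
    AlgEquiv.spectrum_eq (Matrix.toEuclideanCLM (𝕜 := ℂ) (n := Fin r)) (M.map Complex.ofReal)
  constructor
  · obtain ⟨μ0, hμ0, habs0⟩ := hlam.1
    have h1 : ‖μ0‖ ≤ ‖(toEuclideanCLM (𝕜 := ℂ) (M.map Complex.ofReal) :
        EuclideanSpace ℂ (Fin r) →L[ℂ] EuclideanSpace ℂ (Fin r))‖ :=
      spectrum.norm_le_norm_of_mem (hspec ▸ hμ0)
    rw [habs0] at h1
    exact le_trans h1 (complexification_norm_le M)
  · have hC := entries_le_sq_spectral hr M hM lam hlam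
    have hlam0 : 0 ≤ lam ^ 2 := le_trans zero_le_one (le_trans (hM ⟨0, hr⟩ ⟨0, hr⟩) (hC _ _))
    exact opNorm_le_of_entries_le r M (fun i j => le_trans zero_le_one (hM i j)) (lam ^ 2)
      hlam0 hC
end

section
/- Let r ≥ 2 and let θ₁,…,θₙ be an admissible sequence of elementary Nielsen automorphisms of F_r, where θ_i = [x_i ↦ y_i x_i]. Then the composition of derivative maps D(θₙ ∘ ⋯ ∘ θ₁) := Dθₙ ∘ ⋯ ∘ Dθ₁ : A^{±1} → A^{±1} has image exactly A^{±1} ∖ {xₙ}; in particular it is non-injective with image of size exactly 2r − 1, so exactly one pair of distinct letters is identified. -/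
open scoped Classical

abbrev Letter (r : ℕ) := Fin r × Bool

def linv {r : ℕ} (a : Letter r) : Letter r := (a.1, !a.2)

/-- An elementary Nielsen automorphism `[x ↦ yx]` is parametrized by the pair `(x, y)`
with `y ≠ x` and `y ≠ x⁻¹`. -/
def Nielsen {r : ℕ} (p : Letter r × Letter r) : Prop := p.2 ≠ p.1 ∧ p.2 ≠ linv p.1

/-- Admissibility of the ordered pair `([x ↦ yx], [x′ ↦ y′x′])`. -/
def Adm {r : ℕ} (p q : Letter r × Letter r) : Prop :=
  (q.1 = p.1 ∧ q.2 ≠ linv p.2) ∨ (q.2 = p.1 ∧ q.1 ≠ linv p.2)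

/-- The derivative map of `[x ↦ yx]`: sends `x ↦ y` and fixes every other letter. -/
def Dmap {r : ℕ} (p : Letter r × Letter r) (a : Letter r) : Letter r :=
  if a = p.1 then p.2 else a

/-- The composition `Dθₙ ∘ ⋯ ∘ Dθ₁` of derivative maps (applying `θ 0` first). -/
def DcompN (r n : ℕ) (θ : ℕ → Letter r × Letter r) (a : Letter r) : Letter r :=
  (List.range n).foldl (fun b i => Dmap (θ i) b) a

/-- Letter-by-letter substitution for `[x ↦ yx]`: replaces `x` by `yx`, `x⁻¹` by `x⁻¹y⁻¹`. -/
def subst (r : ℕ) (p : Letter r × Letter r) (w : List (Letter r)) : List (Letter r) :=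
  w.flatMap (fun a =>
    if a = p.1 then [p.2, p.1]
    else if a = linv p.1 then [linv p.1, linv p.2]
    else [a])

/-- Apply the substitutions `θ 0, θ 1, …, θ (n-1)` in order, letter by letter. -/
def iterSubst (r n : ℕ) (θ : ℕ → Letter r × Letter r) (w : List (Letter r)) : List (Letter r) :=
  (List.range n).foldl (fun w i => subst r (θ i) w) w

lemma DcompN_succ (r n : ℕ) (θ : ℕ → Letter r × Letter r) :
    DcompN r (n + 1) θ = fun a => Dmap (θ n) (DcompN r n θ a) := by
  funext a
  simp [DcompN, List.range_succ]

lemma Dmap_image (r : ℕ) (q : Letter r × Letter r) (x : Letter r)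
    (hq : q.2 ≠ q.1) (h : q.1 = x ∨ q.2 = x) :
    Dmap q '' {a : Letter r | a ≠ x} = {a : Letter r | a ≠ q.1} := by
  rcases h with h | h
  · subst h
    ext a
    constructor
    · rintro ⟨b, hb, rfl⟩
      simp only [Set.mem_setOf_eq] at hb ⊢
      simpa [Dmap, hb] using hb
    · intro ha
      simp only [Set.mem_setOf_eq] at ha
      exact ⟨a, ha, by simp [Dmap, ha]⟩
  · subst h
    ext a
    constructor
    · rintro ⟨b, hb, rfl⟩
      simp only [Set.mem_setOf_eq] at hb ⊢
      by_cases hb1 : b = q.1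
      · simpa [Dmap, hb1] using hq
      · simpa [Dmap, hb1] using hb1
    · intro ha
      simp only [Set.mem_setOf_eq] at ha
      by_cases ha2 : a = q.2
      · exact ⟨q.1, by simpa [ha2] using hq.symm, by simp [Dmap, ha2]⟩
      · exact ⟨a, ha2, by simp [Dmap, ha]⟩

lemma key (r : ℕ) (θ : ℕ → Letter r × Letter r) :
    ∀ n, 1 ≤ n → (∀ i < n, Nielsen (θ i)) → (∀ i, i + 1 < n → Adm (θ i) (θ (i + 1))) →
    Set.range (DcompN r n θ) = {a : Letter r | a ≠ (θ (n - 1)).1} := by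
  intro n
  induction n with
  | zero => intro h; omega
  | succ m ih =>
    intro _ hN hadm
    rcases Nat.eq_zero_or_pos m with rfl | hm
    · ext a
      constructor
      · rintro ⟨b, rfl⟩
        have h1 : (θ 0).2 ≠ (θ 0).1 := (hN 0 (by omega)).1
        have hr1 : List.range 1 = [0] := rfl
        simp only [DcompN, hr1, List.foldl_cons, List.foldl_nil, Set.mem_setOf_eq]
        by_cases hb : b = (θ 0).1 <;> simp [Dmap, hb, h1]
      · intro ha
        simp only [Set.mem_setOf_eq] at ha
        have hr1 : List.range 1 = [0] := rfl
        exact ⟨a, by simp [DcompN, hr1, Dmap, ha]⟩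
    · have ihm := ih hm (fun i hi => hN i (by omega)) (fun i hi => hadm i (by omega))
      rw [DcompN_succ]
      have : Set.range (fun a => Dmap (θ m) (DcompN r m θ a))
          = Dmap (θ m) '' Set.range (DcompN r m θ) := by
        rw [← Set.range_comp]; rfl
      rw [this, ihm]
      have hq : (θ m).2 ≠ (θ m).1 := (hN m (by omega)).1
      have hadm' := hadm (m - 1) (by omega)
      have hm1 : m - 1 + 1 = m := by omega
      rw [hm1] at hadm'
      have hcase : (θ m).1 = (θ (m - 1)).1 ∨ (θ m).2 = (θ (m - 1)).1 := by
        rcases hadm' with ⟨h, _⟩ | ⟨h, _⟩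
        · exact Or.inl h
        · exact Or.inr h
      simpa using Dmap_image r (θ m) ((θ (m - 1)).1) hq hcase

/-- For an admissible sequence θ₁,…,θₙ of elementary Nielsen automorphisms, the composition
of the derivative maps has image exactly A^{±1} ∖ {xₙ}; in particular it is non-injective
with image of size exactly 2r − 1. -/
theorem stmt10 (r n : ℕ) (hr : 2 ≤ r) (hn : 1 ≤ n) (θ : ℕ → Letter r × Letter r)
    (hN : ∀ i < n, Nielsen (θ i))
    (hadm : ∀ i, i + 1 < n → Adm (θ i) (θ (i + 1))) :
    Set.range (DcompN r n θ) = {a : Letter r | a ≠ (θ (n - 1)).1} ∧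
    ¬ Function.Injective (DcompN r n θ) ∧
    (Finset.univ.image (DcompN r n θ)).card = 2 * r - 1 := by

  have hrange := key r θ n hn hN hadm
  set x := (θ (n - 1)).1
  have hx : x ∉ Set.range (DcompN r n θ) := by rw [hrange]; simp
  refine ⟨hrange, ?_, ?_⟩
  · intro hinj
    have hsurj := hinj.surjective_of_finite (Equiv.refl _)
    exact hx (hsurj x)
  · have himg : Finset.univ.image (DcompN r n θ) = Finset.univ.erase x := by
      apply Finset.coe_injective
      rw [Finset.coe_image, Finset.coe_univ, Set.image_univ, hrange, Finset.coe_erase]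
      ext a; simp
    rw [himg, Finset.card_erase_of_mem (Finset.mem_univ x), Finset.card_univ]
    simp [Fintype.card_prod, mul_comm]
end

section
/- Let r ≥ 2 and let θ₁,…,θₙ be an admissible sequence of elementary Nielsen automorphisms of F_r with θ_i = [x_i ↦ y_i x_i]. Then for every a ∈ A^{±1}, applying the substitutions θ₁, then θ₂, …, then θₙ letter-by-letter to a (i.e., computing (θₙ ∘ ⋯ ∘ θ₁)(a) by iterated substitution) produces a word over A^{±1} that is freely reduced; that is, no free cancellation occurs at any stage. -/
open scoped Classical

lemma linv_linv {r : ℕ} (a : Letter r) : linv (linv a) = a := by simp [linv]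
lemma linv_ne {r : ℕ} (a : Letter r) : linv a ≠ a := by simp [linv, Prod.ext_iff]
lemma linv_eq_comm {r : ℕ} {a b : Letter r} : a = linv b ↔ b = linv a := by
  constructor <;> rintro rfl <;> rw [linv_linv]

def block {r : ℕ} (q : Letter r × Letter r) (a : Letter r) : List (Letter r) :=
  if a = q.1 then [q.2, q.1] else if a = linv q.1 then [linv q.1, linv q.2] else [a]

lemma subst_eq_bind {r : ℕ} (q : Letter r × Letter r) (w : List (Letter r)) :
    subst r q w = w.flatMap (block q) := rfl

lemma subst_cons {r : ℕ} (q : Letter r × Letter r) (a : Letter r) (w : List (Letter r)) :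
    subst r q (a :: w) = block q a ++ subst r q w := by
  simp [subst_eq_bind, List.flatMap_cons]

/-- The invariant relation on adjacent letters after applying `[x ↦ yx]` with `p = (x,y)`. -/
def GoodRel {r : ℕ} (p : Letter r × Letter r) (u v : Letter r) : Prop :=
  v ≠ linv u ∧ ((u = p.2 ∧ v = p.1) ∨ (u = linv p.1 ∧ v = linv p.2) ∨ (u ≠ linv p.1 ∧ v ≠ p.1))

lemma dmap_ne_fst {r : ℕ} {q : Letter r × Letter r} (hq : Nielsen q) (c : Letter r) :
    Dmap q c ≠ q.1 := by
  unfold Dmap; split_ifs with h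
  · exact hq.1
  · exact h

lemma dmap_inj {r : ℕ} {q : Letter r × Letter r} {c d : Letter r}
    (h : Dmap q c = Dmap q d) (hcd : c ≠ d) :
    (c = q.1 ∧ d = q.2) ∨ (c = q.2 ∧ d = q.1) := by
  unfold Dmap at h; split_ifs at h with h1 h2 h2
  · exact absurd (h1.trans h2.symm) hcd
  · exact Or.inl ⟨h1, h.symm⟩
  · exact Or.inr ⟨h, h2⟩
  · exact absurd h hcd

lemma chain'_block {r : ℕ} {q : Letter r × Letter r} (hq : Nielsen q) (a : Letter r) :
    (block q a).Chain' (GoodRel q) := by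
  unfold block; split_ifs with h1 h2
  · refine List.isChain_pair.mpr ⟨?_, Or.inl ⟨rfl, rfl⟩⟩
    intro h; exact hq.2 (linv_eq_comm.mp h)
  · refine List.isChain_pair.mpr ⟨?_, Or.inr (Or.inl ⟨rfl, rfl⟩)⟩
    rw [linv_linv]; intro h; exact hq.2 (linv_eq_comm.mpr h.symm)
  · simp [List.Chain']

lemma head?_block {r : ℕ} (q : Letter r × Letter r) (a : Letter r) :
    (block q a).head? = some (Dmap q a) := by
  unfold block Dmap; split_ifs with h1 h2 <;> simp_all

lemma getLast?_block {r : ℕ} (q : Letter r × Letter r) (a : Letter r) :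
    (block q a).getLast? = some (linv (Dmap q (linv a))) := by
  unfold block
  split_ifs with h1 h2
  · subst h1
    have h : linv q.1 ≠ q.1 := linv_ne q.1
    simp [Dmap, h, linv_linv]
  · have h : linv a = q.1 := by rw [h2, linv_linv]
    simp [Dmap, h]
  · have h : linv a ≠ q.1 := fun hh => h2 (linv_eq_comm.mpr hh.symm)
    simp [Dmap, h, linv_linv]

lemma block_ne_nil {r : ℕ} (q : Letter r × Letter r) (a : Letter r) : block q a ≠ [] := by
  unfold block; split_ifs <;> simp

lemma good_junction {r : ℕ} {p q : Letter r × Letter r} (hp : Nielsen p) (hq : Nielsen q)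
    (hadm : Adm p q) {u v : Letter r} (h : GoodRel p u v) :
    GoodRel q (linv (Dmap q (linv u))) (Dmap q v) := by
  obtain ⟨hne, hcase⟩ := h
  constructor
  · rw [linv_linv]
    intro heq
    have hvu : v ≠ linv u := hne
    rcases dmap_inj heq hvu with ⟨hv, hu⟩ | ⟨hv, hu⟩ <;>
      rcases hcase with ⟨h1, h2⟩ | ⟨h1, h2⟩ | ⟨h1, h2⟩ <;>
      rcases hadm with ⟨ha1, ha2⟩ | ⟨ha1, ha2⟩ <;>
      simp_all [Nielsen, linv_eq_comm, linv_linv]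
  · refine Or.inr (Or.inr ⟨?_, dmap_ne_fst hq v⟩)
    intro hh
    exact dmap_ne_fst hq (linv u)
      (by rw [← linv_linv (Dmap q (linv u)), hh, linv_linv])

lemma chain'_subst {r : ℕ} {p q : Letter r × Letter r} (hq : Nielsen q)
    (H : ∀ u v, GoodRel p u v → GoodRel q (linv (Dmap q (linv u))) (Dmap q v)) :
    ∀ w : List (Letter r), w.Chain' (GoodRel p) → (subst r q w).Chain' (GoodRel q) := by
  intro w
  induction w with
  | nil => intro _; simp [subst, List.Chain']
  | cons a w ih =>
    intro hw
    rw [subst_cons]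
    apply List.isChain_append.mpr
    refine ⟨chain'_block hq a, ih (List.IsChain.tail hw), ?_⟩
    intro x hx y hy
    rw [getLast?_block] at hx
    simp only [Option.mem_def, Option.some.injEq] at hx
    subst hx
    match w with
    | [] => simp [subst] at hy
    | b :: w' =>
      rw [subst_cons] at hy
      rw [List.head?_append_of_ne_nil _ (block_ne_nil q b), head?_block] at hy
      simp only [Option.mem_def, Option.some.injEq] at hy
      subst hy
      exact H a b (List.isChain_cons_cons.mp hw).1

lemma iterSubst_succ {r : ℕ} (m : ℕ) (θ : ℕ → Letter r × Letter r) (w : List (Letter r)) :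
    iterSubst r (m + 1) θ w = subst r (θ m) (iterSubst r m θ w) := by
  simp [iterSubst, List.range_succ]

/-- For an admissible sequence of elementary Nielsen automorphisms, computing the image of a
letter by iterated letter-by-letter substitution produces a freely reduced word at every
stage. -/
theorem stmt11 (r n : ℕ) (hr : 2 ≤ r) (θ : ℕ → Letter r × Letter r)
    (hN : ∀ i < n, Nielsen (θ i))
    (hadm : ∀ i, i + 1 < n → Adm (θ i) (θ (i + 1))) :
    ∀ a : Letter r, ∀ m ≤ n,
      (iterSubst r m θ [a]).Chain' (fun u v => v ≠ linv u) := by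
  intro a m hm
  have key : ∀ k, k ≤ n → 1 ≤ k →
      (iterSubst r k θ [a]).Chain' (GoodRel (θ (k - 1))) := by
    intro k
    induction k with
    | zero => intro _ h; omega
    | succ k ih =>
      intro hk _
      rw [iterSubst_succ]
      rcases Nat.eq_zero_or_pos k with rfl | hk1
      · have h0 : iterSubst r 0 θ [a] = [a] := by simp [iterSubst]
        rw [h0]
        have hb : subst r (θ 0) [a] = block (θ 0) a := by
          simp [subst_eq_bind, block]
        simpa [hb] using chain'_block (hN 0 (by omega)) a
      · have h1 := ih (by omega) hk1
        have hadm' := hadm (k - 1) (by omega)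
        have hk' : k - 1 + 1 = k := by omega
        rw [hk'] at hadm'
        have hNk := hN k (by omega)
        have := chain'_subst hNk
          (fun u v h => good_junction (hN (k - 1) (by omega)) hNk hadm' h) _ h1
        simpa using this
  rcases Nat.eq_zero_or_pos m with rfl | hm1
  · simp [iterSubst, List.Chain']
  · exact List.IsChain.imp (fun ⦃u v⦄ h => h.1) (key m hm hm1)
end
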